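/- Let d ≥ 2. There is no term order ≤ on the monoid of d-variate terms that is maxdeg-compatible, i.e., no term order such that t₁ ≤ t₂ implies maxdeg(t₁) ≤ maxdeg(t₂) for all terms t₁, t₂, where maxdeg(X^k) = max{k_1,…,k_d}. -/

import Mathlib

/-- **(Remark, Section 3.2.)** For `d ≥ 2` there is no maxdeg-compatible term order on the
monoid of `d`-variate terms: no term order `le` satisfies that `le t₁ t₂` implies
`maxdeg t₁ ≤ maxdeg t₂`, where `maxdeg (X^k) = max {k_1, …, k_d}`. -/
theorem no_maxdeg_compatible_term_order
    {d : ℕ} (hd : 2 ≤ d)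
    (le : (Fin d →₀ ℕ) → (Fin d →₀ ℕ) → Prop)
    (hlin : IsLinearOrder (Fin d →₀ ℕ) le)
    (hone : ∀ t, le 0 t)
    (hmul : ∀ t₁ t₂ t₃, le t₁ t₂ → le (t₁ + t₃) (t₂ + t₃)) :
    ¬ (∀ t₁ t₂, le t₁ t₂ → (Finset.univ.sup fun i => t₁ i) ≤ Finset.univ.sup fun i => t₂ i) := by
  intro hcompat
  have h1 : (1 : ℕ) < d := hd
  set x : Fin d := ⟨0, by omega⟩
  set y : Fin d := ⟨1, by omega⟩
  have hxy : x ≠ y := by simp [x, y, Fin.ext_iff]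
  -- key: if le (single u 1) (single v 1) with u ≠ v, contradiction
  have key : ∀ u v : Fin d, u ≠ v → le (Finsupp.single u 1) (Finsupp.single v 1) → False := by
    intro u v huv hle
    have h2 := hmul _ _ (Finsupp.single u 1) hle
    have h3 := hcompat _ _ h2
    have hL : (2 : ℕ) ≤ Finset.univ.sup fun i =>
        (Finsupp.single u 1 + Finsupp.single u 1 : Fin d →₀ ℕ) i := by
      have := Finset.le_sup (f := fun i =>
        (Finsupp.single u 1 + Finsupp.single u 1 : Fin d →₀ ℕ) i) (Finset.mem_univ u)
      simpa using this
    have hR : (Finset.univ.sup fun i =>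
        (Finsupp.single v 1 + Finsupp.single u 1 : Fin d →₀ ℕ) i) ≤ 1 := by
      apply Finset.sup_le
      intro i _
      simp only [Finsupp.add_apply, Finsupp.single_apply]
      by_cases h1 : v = i <;> by_cases h2 : u = i <;> simp_all
    omega
  rcases hlin.toTotal.total (Finsupp.single x 1) (Finsupp.single y 1) with h | h
  · exact key x y hxy h
  · exact key y x hxy.symm h
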